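/- arXiv:1402.4592 — 4 statements merged into one kernel-verified Lean document; each statement's English description precedes it below -/
import Mathlib

section
/- Let θ : S → T be a premorphism of inverse semigroups. Then for all a ∈ S, θ(a⁻¹) = (θ(a))⁻¹. -/
/-- An inverse semigroup: a semigroup in which every element `a` has a
(unique) inverse `a⁻¹` with `a * a⁻¹ * a = a` and `a⁻¹ * a * a⁻¹ = a⁻¹`. -/
class InverseSemigroup (S : Type*) extends Semigroup S, Inv S where
  mul_inv_mul : ∀ a : S, a * a⁻¹ * a = a
  inv_mul_inv : ∀ a : S, a⁻¹ * a * a⁻¹ = a⁻¹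
  inv_unique : ∀ a b : S, a * b * a = a → b * a * b = b → b = a⁻¹

/-- The natural partial order on an inverse semigroup:
`a ≤ b` iff `a = e * b` for some idempotent `e`. -/
def npo {S : Type*} [InverseSemigroup S] (a b : S) : Prop :=
  ∃ e : S, e * e = e ∧ a = e * b

/-- A premorphism of inverse semigroups: `θ (a * b) ≤ θ a * θ b` in the
natural partial order of the codomain. -/
def IsPremorphism {S T : Type*} [InverseSemigroup S] [InverseSemigroup T]
    (θ : S → T) : Prop :=
  ∀ a b : S, npo (θ (a * b)) (θ a * θ b)

section Aux

variable {S : Type*} [InverseSemigroup S]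

private lemma mim (a : S) : a * a⁻¹ * a = a := InverseSemigroup.mul_inv_mul a

private lemma imi (a : S) : a⁻¹ * a * a⁻¹ = a⁻¹ := InverseSemigroup.inv_mul_inv a

private lemma mulext {a b : S} (h : a = b) : ∀ z : S, a * z = b * z := fun z => by rw [h]

private lemma inv_inv' (a : S) : (a⁻¹)⁻¹ = a :=
  (InverseSemigroup.inv_unique a⁻¹ a (imi a) (mim a)).symm

private lemma idem_inv {e : S} (he : e * e = e) : e⁻¹ = e :=
  (InverseSemigroup.inv_unique e e (by rw [he, he]) (by rw [he, he])).symm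

private lemma idem_mul_idem {e f : S} (he : e * e = e) (hf : f * f = f) :
    (e * f) * (e * f) = e * f := by
  have h1 := mim (e * f)
  have h2 := imi (e * f)
  have h1r := h1
  have h2r := h2
  have h1e := mulext h1
  have h2e := mulext h2
  have hee := mulext he
  have hfe := mulext hf
  simp only [mul_assoc] at h1r h2r h1e h2e hee hfe
  have g1 : (e * f) * (f * (e * f)⁻¹ * e) * (e * f) = e * f := by
    simp only [mul_assoc, hee, hfe, h1r, h2r, h1e, h2e]
  have g2 : (f * (e * f)⁻¹ * e) * (e * f) * (f * (e * f)⁻¹ * e) = f * (e * f)⁻¹ * e := by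
    simp only [mul_assoc, hee, hfe, h1r, h2r, h1e, h2e]
  have hfxe : f * (e * f)⁻¹ * e = (e * f)⁻¹ :=
    InverseSemigroup.inv_unique (e * f) _ g1 g2
  have hxx : (e * f)⁻¹ * (e * f)⁻¹ = (e * f)⁻¹ := by
    conv_lhs => rw [← hfxe]
    simp only [mul_assoc, h2r, h2e]
    rw [← mul_assoc]
    exact hfxe
  have h3 : e * f = ((e * f)⁻¹)⁻¹ :=
    InverseSemigroup.inv_unique ((e * f)⁻¹) (e * f) h2 h1
  rw [h3, idem_inv hxx]
  exact hxx

private lemma idem_comm {e f : S} (he : e * e = e) (hf : f * f = f) :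
    e * f = f * e := by
  have hef := idem_mul_idem he hf
  have hfe := idem_mul_idem hf he
  have hefr := hef
  have hfer := hfe
  have hee := mulext he
  have hff := mulext hf
  have hefe := mulext hef
  have hfee := mulext hfe
  simp only [mul_assoc] at hefr hfer hee hff hefe hfee
  have g1 : (e * f) * (f * e) * (e * f) = e * f := by
    simp only [mul_assoc, hee, hff, hefr, hfer, hefe, hfee]
  have g2 : (f * e) * (e * f) * (f * e) = f * e := by
    simp only [mul_assoc, hee, hff, hefr, hfer, hefe, hfee]
  have hq : f * e = (e * f)⁻¹ := InverseSemigroup.inv_unique (e * f) (f * e) g1 g2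
  rw [hq]
  exact (idem_inv hef).symm

private lemma mul_inv_self_idem (a : S) : (a * a⁻¹) * (a * a⁻¹) = a * a⁻¹ := by
  calc (a * a⁻¹) * (a * a⁻¹) = (a * a⁻¹ * a) * a⁻¹ := by simp only [mul_assoc]
    _ = a * a⁻¹ := by rw [mim]

private lemma inv_mul_self_idem (a : S) : (a⁻¹ * a) * (a⁻¹ * a) = a⁻¹ * a := by
  calc (a⁻¹ * a) * (a⁻¹ * a) = (a⁻¹ * a * a⁻¹) * a := by simp only [mul_assoc]
    _ = a⁻¹ * a := by rw [imi]

private lemma mul_inv_rev' (a b : S) : (a * b)⁻¹ = b⁻¹ * a⁻¹ := by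
  have p1 : (a * b) * (b⁻¹ * a⁻¹) * (a * b) = a * b := by
    calc (a * b) * (b⁻¹ * a⁻¹) * (a * b)
        = a * ((b * b⁻¹) * (a⁻¹ * a)) * b := by simp only [mul_assoc]
      _ = a * ((a⁻¹ * a) * (b * b⁻¹)) * b := by
          rw [idem_comm (mul_inv_self_idem b) (inv_mul_self_idem a)]
      _ = (a * a⁻¹ * a) * (b * b⁻¹ * b) := by simp only [mul_assoc]
      _ = a * b := by rw [mim, mim]
  have p2 : (b⁻¹ * a⁻¹) * (a * b) * (b⁻¹ * a⁻¹) = b⁻¹ * a⁻¹ := by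
    calc (b⁻¹ * a⁻¹) * (a * b) * (b⁻¹ * a⁻¹)
        = b⁻¹ * ((a⁻¹ * a) * (b * b⁻¹)) * a⁻¹ := by simp only [mul_assoc]
      _ = b⁻¹ * ((b * b⁻¹) * (a⁻¹ * a)) * a⁻¹ := by
          rw [idem_comm (inv_mul_self_idem a) (mul_inv_self_idem b)]
      _ = (b⁻¹ * b * b⁻¹) * (a⁻¹ * a * a⁻¹) := by simp only [mul_assoc]
      _ = b⁻¹ * a⁻¹ := by rw [imi, imi]
  exact (InverseSemigroup.inv_unique (a * b) (b⁻¹ * a⁻¹) p1 p2).symm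

private lemma conj_idem {f : S} (hf : f * f = f) (b : S) :
    (b * f * b⁻¹) * (b * f * b⁻¹) = b * f * b⁻¹ := by
  calc (b * f * b⁻¹) * (b * f * b⁻¹)
      = b * (f * (b⁻¹ * b)) * (f * b⁻¹) := by simp only [mul_assoc]
    _ = b * ((b⁻¹ * b) * f) * (f * b⁻¹) := by rw [idem_comm hf (inv_mul_self_idem b)]
    _ = (b * b⁻¹ * b) * (f * (f * b⁻¹)) := by simp only [mul_assoc]
    _ = b * ((f * f) * b⁻¹) := by rw [mim, mul_assoc, ← mul_assoc f f]
    _ = b * f * b⁻¹ := by rw [hf, mul_assoc]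

private lemma npo_trans {a b c : S} (h : npo a b) (k : npo b c) : npo a c := by
  obtain ⟨e, he, ha⟩ := h
  obtain ⟨f, hf, hb⟩ := k
  exact ⟨e * f, idem_mul_idem he hf, by rw [ha, hb, mul_assoc]⟩

private lemma npo_mul_right {a b : S} (h : npo a b) (w : S) : npo (a * w) (b * w) := by
  obtain ⟨e, he, ha⟩ := h
  exact ⟨e, he, by rw [ha, mul_assoc]⟩

private lemma npo_of_ebf {a b e f : S} (he : e * e = e) (hf : f * f = f)
    (h : a = e * b * f) : npo a b := by
  refine ⟨e * (b * f * b⁻¹), idem_mul_idem he (conj_idem hf b), ?_⟩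
  have key : (b * f * b⁻¹) * b = b * f := by
    calc (b * f * b⁻¹) * b = b * (f * (b⁻¹ * b)) := by simp only [mul_assoc]
      _ = b * ((b⁻¹ * b) * f) := by rw [idem_comm hf (inv_mul_self_idem b)]
      _ = (b * b⁻¹ * b) * f := by simp only [mul_assoc]
      _ = b * f := by rw [mim]
  calc a = e * (b * f) := by rw [h, mul_assoc]
    _ = e * ((b * f * b⁻¹) * b) := by rw [key]
    _ = e * (b * f * b⁻¹) * b := (mul_assoc _ _ _).symm

private lemma npo_antisymm {a b : S} (h : npo a b) (k : npo b a) : a = b := by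
  obtain ⟨e, he, ha⟩ := h
  obtain ⟨f, hf, hb⟩ := k
  have key : a = e * (f * a) := by rw [← hb, ← ha]
  have hfa : f * a = a := by
    calc f * a = f * (e * (f * a)) := by rw [← key]
      _ = ((f * e) * f) * a := by simp only [mul_assoc]
      _ = ((e * f) * f) * a := by rw [idem_comm hf he]
      _ = (e * (f * f)) * a := by simp only [mul_assoc]
      _ = (e * f) * a := by rw [hf]
      _ = e * (f * a) := by rw [mul_assoc]
      _ = a := key.symm
  rw [hb, hfa]

private lemma npo_self_char {a b : S} (h : npo a b) : a = a * b⁻¹ * a := by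
  obtain ⟨e, he, ha⟩ := h
  rw [ha]
  symm
  calc (e * b) * b⁻¹ * (e * b) = e * ((b * b⁻¹) * e) * b := by simp only [mul_assoc]
    _ = e * (e * (b * b⁻¹)) * b := by rw [idem_comm (mul_inv_self_idem b) he]
    _ = (e * e) * (b * b⁻¹ * b) := by simp only [mul_assoc]
    _ = e * b := by rw [he, mim]

private lemma npo_inv {a b : S} (h : npo a b) : npo a⁻¹ b⁻¹ := by
  obtain ⟨e, he, ha⟩ := h
  have hai : a⁻¹ = b⁻¹ * e := by rw [ha, mul_inv_rev', idem_inv he]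
  refine ⟨b⁻¹ * e * (b⁻¹)⁻¹, conj_idem he b⁻¹, ?_⟩
  rw [hai, inv_inv']
  symm
  calc b⁻¹ * e * b * b⁻¹ = b⁻¹ * (e * (b * b⁻¹)) := by simp only [mul_assoc]
    _ = b⁻¹ * ((b * b⁻¹) * e) := by rw [idem_comm he (mul_inv_self_idem b)]
    _ = (b⁻¹ * b * b⁻¹) * e := by simp only [mul_assoc]
    _ = b⁻¹ * e := by rw [imi]

end Aux

theorem premorphism_inv {S T : Type*} [InverseSemigroup S] [InverseSemigroup T]
    (θ : S → T) (hθ : IsPremorphism θ) :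
    ∀ a : S, θ (a⁻¹) = (θ a)⁻¹ := by
  intro a
  have h1 : npo (θ a) (θ a * θ (a⁻¹) * θ a) := by
    have k1 := hθ (a * a⁻¹) a
    rw [mim] at k1
    exact npo_trans k1 (npo_mul_right (hθ a a⁻¹) (θ a))
  have h2 : npo (θ (a⁻¹)) (θ (a⁻¹) * θ a * θ (a⁻¹)) := by
    have k1 := hθ (a⁻¹ * a) a⁻¹
    rw [imi] at k1
    exact npo_trans k1 (npo_mul_right (hθ a⁻¹ a) (θ (a⁻¹)))
  have c1 := npo_self_char h1
  rw [mul_inv_rev', mul_inv_rev'] at c1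
  have hx : npo (θ a) ((θ (a⁻¹))⁻¹) := by
    refine npo_of_ebf (mul_inv_self_idem (θ a)) (inv_mul_self_idem (θ a)) ?_
    simp only [mul_assoc] at c1 ⊢
    exact c1
  have hx' : npo ((θ a)⁻¹) (θ (a⁻¹)) := by
    have := npo_inv hx
    rwa [inv_inv'] at this
  have c2 := npo_self_char h2
  rw [mul_inv_rev', mul_inv_rev'] at c2
  have hy : npo (θ (a⁻¹)) ((θ a)⁻¹) := by
    refine npo_of_ebf (mul_inv_self_idem (θ (a⁻¹))) (inv_mul_self_idem (θ (a⁻¹))) ?_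
    simp only [mul_assoc] at c2 ⊢
    exact c2
  exact npo_antisymm hy hx'
end

section
/- Let S be an inverse semigroup and let η : S → S be an ordered function that preserves the heap operation (η(a*b⁻¹*c) = η(a)*(η(b))⁻¹*η(c) for all a, b, c ∈ S), and define φ : S → S by φ(a) = η(a)*(η(a⁻¹*a))⁻¹. Then for all s ∈ S one has η(s) = φ(s)*η(s⁻¹*s) and (φ(s))⁻¹*φ(s) = η(s⁻¹*s)*(η(s⁻¹*s))⁻¹. -/
theorem heap_preserving_decomposition {S : Type*} [InverseSemigroup S]
    (η : S → S)
    (hord : ∀ a b : S, npo a b → npo (η a) (η b))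
    (hheap : ∀ a b c : S, η (a * b⁻¹ * c) = η a * (η b)⁻¹ * η c) :
    ∀ s : S,
      η s = (η s * (η (s⁻¹ * s))⁻¹) * η (s⁻¹ * s) ∧
      (η s * (η (s⁻¹ * s))⁻¹)⁻¹ * (η s * (η (s⁻¹ * s))⁻¹) =
        η (s⁻¹ * s) * (η (s⁻¹ * s))⁻¹ := by
  intro s
  set e := s⁻¹ * s with he
  have hee : e * e = e := by
    rw [he]
    calc (s⁻¹ * s) * (s⁻¹ * s) = s⁻¹ * (s * s⁻¹ * s) := by
          simp only [mul_assoc]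
      _ = s⁻¹ * s := by rw [InverseSemigroup.mul_inv_mul]
  have hse : s * e = s := by
    rw [he, ← mul_assoc, InverseSemigroup.mul_inv_mul]
  have hei : e⁻¹ = e :=
    (InverseSemigroup.inv_unique e e (by rw [hee, hee]) (by rw [hee, hee])).symm
  have h1 : η s = η s * (η e)⁻¹ * η e := by
    conv_lhs => rw [show s = s * e⁻¹ * e by rw [hei, mul_assoc, hee, hse]]
    exact hheap s e e
  have h2 : η e = η e * (η s)⁻¹ * η s := by
    conv_lhs => rw [show e = e * s⁻¹ * s by rw [mul_assoc, ← he, hee]]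
    exact hheap e s s
  refine ⟨h1, ?_⟩
  have hinv : η e * (η s)⁻¹ = (η s * (η e)⁻¹)⁻¹ := by
    apply InverseSemigroup.inv_unique
    · calc η s * (η e)⁻¹ * (η e * (η s)⁻¹) * (η s * (η e)⁻¹)
          = (η s * (η e)⁻¹ * η e) * (η s)⁻¹ * η s * (η e)⁻¹ := by
            simp only [mul_assoc]
        _ = η s * (η s)⁻¹ * η s * (η e)⁻¹ := by rw [← h1]
        _ = η s * (η e)⁻¹ := by rw [InverseSemigroup.mul_inv_mul]
    · calc η e * (η s)⁻¹ * (η s * (η e)⁻¹) * (η e * (η s)⁻¹)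
          = (η e * (η s)⁻¹ * η s) * (η e)⁻¹ * η e * (η s)⁻¹ := by
            simp only [mul_assoc]
        _ = η e * (η e)⁻¹ * η e * (η s)⁻¹ := by rw [← h2]
        _ = η e * (η s)⁻¹ := by rw [InverseSemigroup.mul_inv_mul]
  calc (η s * (η e)⁻¹)⁻¹ * (η s * (η e)⁻¹)
      = η e * (η s)⁻¹ * (η s * (η e)⁻¹) := by rw [hinv]
    _ = (η e * (η s)⁻¹ * η s) * (η e)⁻¹ := by simp only [mul_assoc]
    _ = η e * (η e)⁻¹ := by rw [← h2]
end

section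
/- Let A be a type, let φ : FreeMonoid A → FreeMonoid A be a function, and let σ be a monoid endomorphism of FreeMonoid A such that φ(p*u) = σ(p)*φ(u) for all p, u ∈ FreeMonoid A. Suppose there exists w ∈ FreeMonoid A such that every value of φ is a suffix of w (for all u there exists q with w = q*φ(u)). Then φ is constant: φ(u) = φ(1) for all u ∈ FreeMonoid A (equivalently, σ(u) = 1 for all u). -/
/-- If `φ` is a map of the free monoid with `φ (p * u) = σ p * φ u` for an
endomorphism `σ`, and all values of `φ` are suffixes of a fixed word `w`,
then `φ` is constant (equivalently `σ` is trivial). -/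
theorem bounded_suffix_preserving_is_constant {A : Type*}
    (φ : FreeMonoid A → FreeMonoid A) (σ : FreeMonoid A →* FreeMonoid A)
    (hφ : ∀ p u : FreeMonoid A, φ (p * u) = σ p * φ u)
    (hw : ∃ w : FreeMonoid A, ∀ u : FreeMonoid A, ∃ q : FreeMonoid A, w = q * φ u) :
    (∀ u : FreeMonoid A, φ u = φ 1) ∧ (∀ u : FreeMonoid A, σ u = 1) := by
  obtain ⟨w, hw⟩ := hw
  have hσ : ∀ u : FreeMonoid A, σ u = 1 := by
    intro u
    by_contra h
    have hlen : 1 ≤ (σ u).length := by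
      rcases Nat.eq_zero_or_pos (σ u).length with h0 | h1
      · exact absurd (FreeMonoid.length_eq_zero.mp h0) h
      · exact h1
    obtain ⟨q, hq⟩ := hw (u ^ (w.length + 1))
    have : w.length = q.length + ((σ u).length * (w.length + 1) + (φ 1).length) := by
      have := congrArg FreeMonoid.length hq
      rw [FreeMonoid.length_mul] at this
      rw [show φ (u ^ (w.length + 1)) = σ (u ^ (w.length + 1)) * φ 1 by
        rw [← hφ, mul_one]] at this
      rw [FreeMonoid.length_mul, map_pow] at this
      have hp : ∀ n : ℕ, (σ u ^ n).length = (σ u).length * n := by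
        intro n
        induction n with
        | zero => simp [FreeMonoid.length_one]
        | succ n ih => rw [pow_succ, FreeMonoid.length_mul, ih]; ring
      rw [hp] at this
      linarith
    nlinarith [Nat.le_of_eq this]
  refine ⟨fun u => ?_, hσ⟩
  have := hφ u 1
  rw [mul_one, hσ u, one_mul] at this
  exact this
end

section
/- Let C be a connected groupoid (a groupoid in which for any two objects x, y there is an arrow x ⟶ y), fix an object x₀, and let L be the group of arrows x₀ ⟶ x₀ under composition. A flow on C is a function τ assigning to each object x an arrow τ(x) whose source is x; flows form a monoid Φ(C) under the composition (τ ⋆ σ)(x) = τ(x) ≫ σ(t(τ(x))), where t denotes the target of an arrow, with identity the flow x ↦ id_x. Then there is a bijection F from Φ(C) to (obj C → L) × (obj C → obj C) which sends the identity flow to (the constant function 1, the identity map) and satisfies: if F(τ) = (λ₁, θ₁) and F(σ) = (λ₂, θ₂), then F(τ ⋆ σ) = (x ↦ λ₁(x) * λ₂(θ₁(x)), x ↦ θ₂(θ₁(x))). That is, the flow monoid of a connected groupoid with local group L at x₀ is isomorphic to the wreath product L ≀ T(obj C) of L with the full transformation monoid on the objects of C. -/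
open CategoryTheory

/-- A flow on a groupoid: an assignment to each object `x` of an arrow with
source `x` (encoded as a target together with an arrow to it). -/
def GpdFlow (C : Type*) [Groupoid C] :=
  ∀ x : C, Σ y : C, x ⟶ y

/-- Composition of flows: `(τ ⋆ σ)(x) = τ(x) ≫ σ(t(τ(x)))`. -/
def GpdFlow.comp {C : Type*} [Groupoid C] (τ σ : GpdFlow C) : GpdFlow C :=
  fun x => ⟨(σ (τ x).1).1, (τ x).2 ≫ (σ (τ x).1).2⟩

/-- The identity flow `x ↦ id_x`. -/
def GpdFlow.id (C : Type*) [Groupoid C] : GpdFlow C :=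
  fun x => ⟨x, 𝟙 x⟩

/-- The flow monoid of a connected groupoid `C` with local (vertex) group
`L = (x₀ ⟶ x₀)` is isomorphic to the wreath product `L ≀ T(obj C)`: there is
a bijection from flows to pairs `(λ, θ)` with `λ : obj C → L` and
`θ : obj C → obj C`, sending the identity flow to the identity pair and
transporting flow composition to the wreath product multiplication
`(λ₁,θ₁)(λ₂,θ₂) = (x ↦ λ₁ x * λ₂ (θ₁ x), θ₁ followed by θ₂)`. -/
theorem flow_monoid_of_connected_groupoid {C : Type*} [Groupoid C]
    (hconn : ∀ x y : C, Nonempty (x ⟶ y)) (x₀ : C) :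
    ∃ F : GpdFlow C ≃ (C → (x₀ ⟶ x₀)) × (C → C),
      F (GpdFlow.id C) = (fun _ => 1, fun x => x) ∧
      ∀ τ σ : GpdFlow C,
        F (GpdFlow.comp τ σ) =
          (fun x => (F τ).1 x * (F σ).1 ((F τ).2 x),
           fun x => (F σ).2 ((F τ).2 x)) := by
  set g : ∀ x : C, x₀ ⟶ x := fun x => (hconn x₀ x).some with hg
  refine ⟨⟨fun τ => (fun x => g x ≫ (τ x).2 ≫ Groupoid.inv (g ((τ x).1)),
      fun x => (τ x).1),
    fun p x => ⟨p.2 x, Groupoid.inv (g x) ≫ p.1 x ≫ g (p.2 x)⟩,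
    ?_, ?_⟩, ?_, ?_⟩
  · intro τ
    funext x
    simp
  · intro p
    ext x <;> simp
  · ext x <;> erw [Equiv.coe_fn_mk] <;> simp [GpdFlow.id, End.one_def]
  · intro τ σ
    ext x <;>
      erw [Equiv.coe_fn_mk] <;> simp [GpdFlow.comp, End.mul_def, Groupoid.inv_comp]
end
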